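/- Let G be a bipartite tree on node set D ⊔ N where |D| = k+1 and |N| = k for a positive integer k. If every node in N has degree 2 in G, then for each i ∈ D, the graph G with node i deleted contains a perfect matching on (D \ {i}) ⊔ N. -/

import Mathlib

theorem stmt_0 {V : Type} [Fintype V] [DecidableEq V]
    (G : SimpleGraph V) [DecidableRel G.Adj]
    (D N : Finset V) (k : ℕ) (hk : 0 < k)
    (hdisj : Disjoint D N) (hcover : D ∪ N = Finset.univ)
    (hD : D.card = k + 1) (hN : N.card = k)
    (htree : G.IsTree)
    (hbip : ∀ u v, G.Adj u v → (u ∈ D ∧ v ∈ N) ∨ (u ∈ N ∧ v ∈ D))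
    (hdeg : ∀ v ∈ N, G.degree v = 2) :
    ∀ i ∈ D, ∃ M : G.Subgraph,
      M.verts = ↑(D.erase i ∪ N) ∧ M.IsMatching := by
  intro i hi
  have hconn := htree.isConnected
  have hnotD : ∀ x ∈ N, x ∉ D := fun x hx hxD =>
    (Finset.disjoint_left.mp hdisj) hxD hx
  have hDN : ∀ u v, G.Adj u v → u ∈ D → v ∈ N := by
    intro u v huv hu
    rcases hbip u v huv with ⟨_, h2⟩ | ⟨h1, _⟩
    · exact h2
    · exact absurd hu (hnotD u h1)
  have hND : ∀ u v, G.Adj u v → u ∈ N → v ∈ D := by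
    intro u v huv hu
    rcases hbip u v huv with ⟨h1, _⟩ | ⟨_, h2⟩
    · exact absurd h1 (hnotD u hu)
    · exact h2
  -- parity along walks
  have hpar : ∀ (x y : V) (p : G.Walk x y), ((x ∈ D) ↔ (y ∈ D)) ↔ Even p.length := by
    intro x y p
    induction p with
    | nil => simp
    | @cons a b c hab q ih =>
      have hopp : (a ∈ D) ↔ ¬ (b ∈ D) := by
        rcases hbip a b hab with ⟨h1, h2⟩ | ⟨h1, h2⟩
        · exact ⟨fun _ => hnotD b h2, fun _ => h1⟩
        · exact ⟨fun ha => absurd ha (hnotD a h1), fun hnb => absurd h2 hnb⟩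
      rw [SimpleGraph.Walk.length_cons, Nat.even_add_one, ← ih]
      tauto
  -- distance parity mod 2
  have hdistD : ∀ x ∈ D, G.dist x i % 2 = 0 := by
    intro x hx
    obtain ⟨p, hp⟩ := (hconn x i).exists_walk_length_eq_dist
    have : Even p.length := (hpar x i p).mp (by simp [hx, hi])
    rw [hp] at this
    exact Nat.even_iff.mp this
  have hdistN : ∀ x ∈ N, G.dist x i % 2 = 1 := by
    intro x hx
    obtain ⟨p, hp⟩ := (hconn x i).exists_walk_length_eq_dist
    have hodd : ¬ Even p.length := by
      rw [← hpar x i p]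
      intro h
      exact hnotD x hx (h.mpr hi)
    rw [hp, Nat.even_iff] at hodd
    omega
  -- support of a shortest walk has small distance
  have hsupp : ∀ (w : V) (p : G.Walk w i) (x : V), x ∈ p.support →
      G.dist x i ≤ p.length := by
    intro w p x hx
    calc G.dist x i ≤ (p.dropUntil x hx).length := SimpleGraph.dist_le _
      _ ≤ p.length := SimpleGraph.Walk.length_dropUntil_le p hx
  -- key: unique "decreasing" neighbor
  have hkey : ∀ v : V, v ≠ i → ∃! w : V,
      G.Adj v w ∧ G.dist w i + 1 = G.dist v i := by
    intro v hv
    have hd0 : G.dist v i ≠ 0 :=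
      SimpleGraph.dist_ne_zero_iff_ne_and_reachable.mpr ⟨hv, hconn v i⟩
    obtain ⟨p, hp⟩ := SimpleGraph.exists_walk_of_dist_ne_zero hd0
    have hex : ∃ w : V, G.Adj v w ∧ G.dist w i + 1 = G.dist v i := by
      cases p with
      | nil => exact absurd rfl hv
      | @cons _ b _ hab q =>
        refine ⟨b, hab, ?_⟩
        rw [SimpleGraph.Walk.length_cons] at hp
        have h1 : G.dist b i ≤ q.length := SimpleGraph.dist_le q
        have h2 : G.dist v i ≤ G.dist v b + G.dist b i := hconn.dist_triangle
        have h3 : G.dist v b = 1 := SimpleGraph.dist_eq_one_iff_adj.mpr hab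
        omega
    obtain ⟨w, hw⟩ := hex
    refine ⟨w, hw, ?_⟩
    -- uniqueness
    have huniq : ∀ w1 w2 : V,
        (G.Adj v w1 ∧ G.dist w1 i + 1 = G.dist v i) →
        (G.Adj v w2 ∧ G.dist w2 i + 1 = G.dist v i) → w1 = w2 := by
      intro w1 w2 ⟨ha1, hd1⟩ ⟨ha2, hd2⟩
      obtain ⟨p1, hp1, hl1⟩ := (hconn w1 i).exists_path_of_dist
      obtain ⟨p2, hp2, hl2⟩ := (hconn w2 i).exists_path_of_dist
      have hv1 : v ∉ p1.support := by
        intro hmem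
        have := hsupp w1 p1 v hmem
        rw [hl1] at this; omega
      have hv2 : v ∉ p2.support := by
        intro hmem
        have := hsupp w2 p2 v hmem
        rw [hl2] at this; omega
      have hc1 : (p1.cons ha1).IsPath := hp1.cons hv1
      have hc2 : (p2.cons ha2).IsPath := hp2.cons hv2
      have := htree.IsAcyclic.path_unique ⟨p1.cons ha1, hc1⟩ ⟨p2.cons ha2, hc2⟩
      have heq : p1.cons ha1 = p2.cons ha2 := congrArg Subtype.val this
      have := congrArg (fun q : G.Walk v i => q.getVert 1) heq
      simpa [SimpleGraph.Walk.getVert_cons_succ, SimpleGraph.Walk.getVert_zero]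
        using this
    exact fun y hy => huniq y w hy hw
  -- vertex in D adjacent to something is a D-vertex; distance facts
  have hne_of_dist : ∀ x : V, G.dist x i ≠ 0 → x ≠ i := by
    intro x hx hxi
    rw [hxi] at hx
    exact hx (SimpleGraph.dist_self)
  -- the matching subgraph
  refine ⟨⟨↑(D.erase i ∪ N),
    fun u w => (u ∈ D.erase i ∧ G.Adj u w ∧ G.dist w i + 1 = G.dist u i) ∨
      (w ∈ D.erase i ∧ G.Adj w u ∧ G.dist u i + 1 = G.dist w i),
    ?_, ?_, ?_⟩, rfl, ?_⟩
  · -- adj_sub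
    rintro u w (⟨_, ha, _⟩ | ⟨_, ha, _⟩)
    · exact ha
    · exact ha.symm
  · -- edge_vert
    rintro u w (⟨hu, _, _⟩ | ⟨hw, ha, _⟩)
    · simp only [Finset.coe_union, Set.mem_union, Finset.mem_coe]
      exact Or.inl hu
    · simp only [Finset.coe_union, Set.mem_union, Finset.mem_coe]
      exact Or.inr (hDN w u ha (Finset.mem_of_mem_erase hw))
  · -- symm
    refine ⟨?_⟩
    rintro u w (⟨hu, ha, hd⟩ | ⟨hw, ha, hd⟩)
    · exact Or.inr ⟨hu, ha, hd⟩
    · exact Or.inl ⟨hw, ha, hd⟩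
  · -- IsMatching
    intro v hv
    simp only [Finset.coe_union, Set.mem_union, Finset.mem_coe] at hv
    rcases hv with hvD | hvN
    · -- v ∈ D.erase i : match to its decreasing neighbor
      have hvne : v ≠ i := Finset.ne_of_mem_erase hvD
      obtain ⟨w, hw, hwu⟩ := hkey v hvne
      refine ⟨w, Or.inl ⟨hvD, hw⟩, ?_⟩
      rintro y (⟨_, hy⟩ | ⟨hy, ha, _⟩)
      · exact hwu y hy
      · exact absurd (Finset.mem_of_mem_erase hvD)
          (hnotD v (hDN y v ha (Finset.mem_of_mem_erase hy)))
    · -- v ∈ N : match to its increasing neighbor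
      have hvne : v ≠ i := fun h => hnotD v hvN (h ▸ hi)
      obtain ⟨w0, ⟨hw0a, hw0d⟩, hw0u⟩ := hkey v hvne
      -- neighbors of v: card 2
      have hcard : (G.neighborFinset v).card = 2 := by
        rw [SimpleGraph.card_neighborFinset_eq_degree]
        exact hdeg v hvN
      have hw0mem : w0 ∈ G.neighborFinset v := by
        rw [SimpleGraph.mem_neighborFinset]; exact hw0a
      have hcard1 : ((G.neighborFinset v).erase w0).card = 1 := by
        rw [Finset.card_erase_of_mem hw0mem, hcard]
      obtain ⟨u, hu⟩ := Finset.card_eq_one.mp hcard1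
      have huerase : u ∈ (G.neighborFinset v).erase w0 := by
        rw [hu]; exact Finset.mem_singleton_self u
      have huw0 : u ≠ w0 := Finset.ne_of_mem_erase huerase
      have hua : G.Adj v u := by
        have := Finset.mem_of_mem_erase huerase
        rwa [SimpleGraph.mem_neighborFinset] at this
      have huD : u ∈ D := hND v u hua hvN
      -- distance of u
      have hdu : G.dist u i = G.dist v i + 1 := by
        have h1 : G.dist u i % 2 = 0 := hdistD u huD
        have h2 : G.dist v i % 2 = 1 := hdistN v hvN
        have h3 : G.dist u i ≤ G.dist u v + G.dist v i := hconn.dist_triangle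
        have h4 : G.dist v i ≤ G.dist v u + G.dist u i := hconn.dist_triangle
        have h5 : G.dist u v = 1 := SimpleGraph.dist_eq_one_iff_adj.mpr hua.symm
        have h6 : G.dist v u = 1 := SimpleGraph.dist_eq_one_iff_adj.mpr hua
        have hnot : G.dist u i + 1 ≠ G.dist v i := by
          intro h
          exact huw0 (hw0u u ⟨hua, h⟩)
        omega
      have hune : u ≠ i := by
        apply hne_of_dist
        omega
      have huerase' : u ∈ D.erase i := Finset.mem_erase.mpr ⟨hune, huD⟩
      refine ⟨u, Or.inr ⟨huerase', hua.symm, by omega⟩, ?_⟩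
      rintro y (⟨hy, _, _⟩ | ⟨hy, ha, hd⟩)
      · exact absurd (Finset.mem_of_mem_erase hy) (hnotD v hvN)
      · -- y adjacent to v with dist y i = dist v i + 1
        have hymem : y ∈ G.neighborFinset v := by
          rw [SimpleGraph.mem_neighborFinset]; exact ha.symm
        have hyne : y ≠ w0 := by
          intro h
          rw [h] at hd
          omega
        have : y ∈ (G.neighborFinset v).erase w0 := Finset.mem_erase.mpr ⟨hyne, hymem⟩
        rw [hu] at this
        exact Finset.mem_singleton.mp this
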